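/- arXiv:1503.08159 — 2 statements merged into one kernel-verified Lean document; each statement's English description precedes it below -/
import Mathlib

section
/- With C_0 = 1 and C_k = 2·(3k−3)!/(k!·(2k−1)!) for k ≥ 1, the sum Σ_{k≥0} C_k·(4/27)^k converges and equals 4/3. -/
/-- The number of rooted 2-connected planar maps with `k` edges (Tutte's formula),
as a real number: `C 0 = 1` and `C k = 2 (3k-3)! / (k! (2k-1)!)` for `k ≥ 1`. -/
noncomputable def C (k : ℕ) : ℝ :=
  if k = 0 then 1
  else 2 * (Nat.factorial (3 * k - 3) : ℝ) /
    ((Nat.factorial k : ℝ) * (Nat.factorial (2 * k - 1) : ℝ))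


/-- Coefficients of powers of the generalized binomial series `B_3`:
`a r n` is the coefficient of `x^n` in `B^r` where `B = 1 + x B^3`. -/
noncomputable def a : ℕ → ℕ → ℝ
  | 0, n => if n = 0 then 1 else 0
  | (r+1), n => (r+1) * (Nat.factorial (3*n + r)) / ((Nat.factorial n) * (Nat.factorial (2*n + r + 1)))

lemma a_nonneg (r n : ℕ) : 0 ≤ a r n := by
  match r with
  | 0 => dsimp [a]; split <;> norm_num
  | r+1 => dsimp [a]; positivity

lemma a_zero_right (r : ℕ) : a r 0 = 1 := by
  match r with
  | 0 => simp [a]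
  | r+1 =>
    simp only [a]
    rw [show 2*0 + r + 1 = r + 1 by ring, Nat.factorial_succ]
    have : (Nat.factorial r : ℝ) ≠ 0 := Nat.cast_ne_zero.mpr (Nat.factorial_ne_zero r)
    simp only [Nat.mul_zero, Nat.zero_add, Nat.factorial_zero]
    push_cast
    field_simp

lemma pascal (s m : ℕ) : a (s+1) (m+1) = a s (m+1) + a (s+3) m := by
  match s with
  | 0 =>
    simp only [a, if_neg (Nat.succ_ne_zero m)]
    rw [show 3*(m+1) + 0 = (3*m + 2) + 1 by ring,
        show 2*(m+1) + 0 + 1 = 2*m + 2 + 1 by ring,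
        show 2*m + 2 + 1 = (2*m + 2) + 1 by ring,
        Nat.factorial_succ (3*m+2), Nat.factorial_succ m]
    have h1 : (Nat.factorial m : ℝ) ≠ 0 := Nat.cast_ne_zero.mpr (Nat.factorial_ne_zero m)
    have h2 : (Nat.factorial (2*m+2+1) : ℝ) ≠ 0 := Nat.cast_ne_zero.mpr (Nat.factorial_ne_zero _)
    push_cast
    field_simp
    ring
  | r+1 =>
    simp only [a]
    rw [show 3*(m+1) + (r+1) = (3*m + r + 3) + 1 by ring,
        show 2*(m+1) + (r+1) + 1 = (2*m + r + 3) + 1 by ring,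
        show 3*(m+1) + r = 3*m + r + 3 by ring,
        show 2*(m+1) + r + 1 = 2*m + r + 3 by ring,
        show 3*m + (r+1+2) = 3*m + r + 3 by ring,
        show 2*m + (r+1+2) + 1 = (2*m + r + 3) + 1 by ring,
        Nat.factorial_succ (3*m + r + 3), Nat.factorial_succ (2*m + r + 3),
        Nat.factorial_succ m]
    have h1 : (Nat.factorial m : ℝ) ≠ 0 := Nat.cast_ne_zero.mpr (Nat.factorial_ne_zero m)
    have h2 : (Nat.factorial (2*m+r+3) : ℝ) ≠ 0 := Nat.cast_ne_zero.mpr (Nat.factorial_ne_zero _)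
    have h3 : (Nat.factorial (3*m+r+3) : ℝ) ≠ 0 := Nat.cast_ne_zero.mpr (Nat.factorial_ne_zero _)
    push_cast
    field_simp
    ring

lemma conv : ∀ (n s r : ℕ), ∑ i ∈ Finset.range (n+1), a r i * a s (n - i) = a (r+s) n := by
  intro n
  induction n with
  | zero => intro s r; simp [a_zero_right]
  | succ n ih =>
    intro s
    induction s with
    | zero =>
      intro r
      rw [Finset.sum_eq_single (n+1)]
      · simp [a_zero_right]
      · intro i hi hne
        have hlt : i < n + 1 := by
          rcases Finset.mem_range.mp hi with h
          omega
        have : n + 1 - i ≠ 0 := by omega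
        simp [a, this]
      · intro h; exact absurd (Finset.self_mem_range_succ (n+1)) h
    | succ s ihs =>
      intro r
      have key : ∀ i ∈ Finset.range (n+1), a r i * a (s+1) (n+1-i)
          = a r i * a s (n+1-i) + a r i * a (s+3) (n-i) := by
        intro i hi
        have hile : i ≤ n := by have := Finset.mem_range.mp hi; omega
        have h1 : n + 1 - i = (n - i) + 1 := by omega
        rw [h1, pascal, mul_add, ← h1]
      rw [Finset.sum_range_succ, Finset.sum_congr rfl key, Finset.sum_add_distrib]
      have e1 : ∑ i ∈ Finset.range (n+1), a r i * a s (n+1-i)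
          = a (r+s) (n+1) - a r (n+1) * a s 0 := by
        have := ihs r
        rw [Finset.sum_range_succ] at this
        simp only [Nat.sub_self] at this
        linarith
      rw [e1, ih (s+3) r, Nat.sub_self, a_zero_right, a_zero_right]
      have := pascal (r+s) n
      rw [show r+s+3 = r+(s+3) by ring] at this
      rw [show r + (s+1) = (r+s)+1 by ring]
      linarith [pascal (r+s) n]

lemma a_three (n : ℕ) : a 3 n = a 1 (n+1) := by
  simp only [a]
  rw [show 3*(n+1) + 0 = (3*n + 2) + 1 by ring,
      show 3*n + 2 = (3*n+2) by ring,
      show 2*(n+1) + 0 + 1 = 2*n + 2 + 1 by ring,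
      show 2*n + 2 + 1 = 2*n + 3 by ring,
      show 2*n + 2 + 1 = 2*n + 3 by ring,
      Nat.factorial_succ (3*n+2), Nat.factorial_succ n]
  have h1 : (Nat.factorial n : ℝ) ≠ 0 := Nat.cast_ne_zero.mpr (Nat.factorial_ne_zero n)
  have h2 : (Nat.factorial (2*n+3) : ℝ) ≠ 0 := Nat.cast_ne_zero.mpr (Nat.factorial_ne_zero _)
  push_cast
  field_simp
  ring

lemma C_succ (n : ℕ) : C (n+1) = 3 * a 1 n - a 2 n := by
  simp only [C, a, if_neg (Nat.succ_ne_zero n)]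
  rw [show 3*(n+1) - 3 = 3*n by omega, show 2*(n+1) - 1 = 2*n + 1 by omega,
      show 3*n + 1 = (3*n) + 1 by ring, show 2*n + 1 + 1 = (2*n+1) + 1 by ring,
      Nat.factorial_succ (3*n), Nat.factorial_succ (2*n+1), Nat.factorial_succ n]
  have h1 : (Nat.factorial n : ℝ) ≠ 0 := Nat.cast_ne_zero.mpr (Nat.factorial_ne_zero n)
  have h2 : (Nat.factorial (2*n+1) : ℝ) ≠ 0 := Nat.cast_ne_zero.mpr (Nat.factorial_ne_zero _)
  have h3 : (Nat.factorial (3*n) : ℝ) ≠ 0 := Nat.cast_ne_zero.mpr (Nat.factorial_ne_zero _)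
  push_cast
  field_simp
  ring

open Finset in
lemma sum_conv_le {f g : ℕ → ℝ} (hf : ∀ i, 0 ≤ f i) (hg : ∀ j, 0 ≤ g j) (N : ℕ) :
    ∑ n ∈ range N, ∑ kl ∈ Finset.HasAntidiagonal.antidiagonal n, f kl.1 * g kl.2
      ≤ (∑ i ∈ range N, f i) * (∑ j ∈ range N, g j) := by
  have hdisj : Set.PairwiseDisjoint ↑(range N) (fun n => (Finset.HasAntidiagonal.antidiagonal n : Finset (ℕ×ℕ))) := by
    intro m _ n _ hmn
    simp only [Finset.disjoint_left]
    intro p hp hq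
    exact hmn (by
      have h1 := Finset.HasAntidiagonal.mem_antidiagonal.mp hp
      have h2 := Finset.HasAntidiagonal.mem_antidiagonal.mp hq
      omega)
  rw [← Finset.sum_biUnion hdisj, Finset.sum_mul_sum, ← Finset.sum_product']
  refine Finset.sum_le_sum_of_subset_of_nonneg ?_ (fun p _ _ => mul_nonneg (hf p.1) (hg p.2))
  intro p hp
  rcases Finset.mem_biUnion.mp hp with ⟨n, hn, hpn⟩
  have h1 := Finset.HasAntidiagonal.mem_antidiagonal.mp hpn
  have h2 := Finset.mem_range.mp hn
  exact Finset.mem_product.mpr ⟨Finset.mem_range.mpr (by omega), Finset.mem_range.mpr (by omega)⟩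

open Finset in
lemma conv_anti (s r n : ℕ) (x : ℝ) :
    ∑ kl ∈ Finset.HasAntidiagonal.antidiagonal n, (a r kl.1 * x ^ kl.1) * (a s kl.2 * x ^ kl.2)
      = a (r+s) n * x ^ n := by
  rw [Finset.Nat.sum_antidiagonal_eq_sum_range_succ_mk, ← conv n s r, Finset.sum_mul]
  refine Finset.sum_congr rfl fun i hi => ?_
  have hin : i ≤ n := by have := Finset.mem_range.mp hi; omega
  have : x ^ i * x ^ (n - i) = x ^ n := by rw [← pow_add]; congr 1; omega
  calc a r i * x ^ i * (a s (n-i) * x ^ (n-i)) = a r i * a s (n-i) * (x^i * x^(n-i)) := by ring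
    _ = a r i * a s (n - i) * x ^ n := by rw [this]

lemma sum_range_le (N : ℕ) :
    ∑ n ∈ Finset.range N, a 1 n * (4/27:ℝ) ^ n ≤ 3/2 := by
  induction N with
  | zero => norm_num
  | succ N ih =>
    have h2 : ∑ n ∈ Finset.range N, a 2 n * (4/27:ℝ) ^ n ≤ 9/4 := by
      calc ∑ n ∈ Finset.range N, a 2 n * (4/27:ℝ) ^ n
          = ∑ n ∈ Finset.range N, ∑ kl ∈ Finset.HasAntidiagonal.antidiagonal n,
              (a 1 kl.1 * (4/27:ℝ) ^ kl.1) * (a 1 kl.2 * (4/27:ℝ) ^ kl.2) := by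
            refine Finset.sum_congr rfl fun n _ => ?_
            rw [conv_anti 1 1 n]
        _ ≤ (∑ i ∈ Finset.range N, a 1 i * (4/27:ℝ)^i) * (∑ j ∈ Finset.range N, a 1 j * (4/27:ℝ)^j) :=
            sum_conv_le (fun i => mul_nonneg (a_nonneg 1 i) (by positivity))
              (fun j => mul_nonneg (a_nonneg 1 j) (by positivity)) N
        _ ≤ (3/2) * (3/2) := by
            have hn : 0 ≤ ∑ i ∈ Finset.range N, a 1 i * (4/27:ℝ)^i :=
              Finset.sum_nonneg fun i _ => mul_nonneg (a_nonneg 1 i) (by positivity)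
            exact mul_le_mul ih ih hn (by norm_num)
        _ = 9/4 := by norm_num
    have h3 : ∑ n ∈ Finset.range N, a 3 n * (4/27:ℝ) ^ n ≤ 27/8 := by
      calc ∑ n ∈ Finset.range N, a 3 n * (4/27:ℝ) ^ n
          = ∑ n ∈ Finset.range N, ∑ kl ∈ Finset.HasAntidiagonal.antidiagonal n,
              (a 1 kl.1 * (4/27:ℝ) ^ kl.1) * (a 2 kl.2 * (4/27:ℝ) ^ kl.2) := by
            refine Finset.sum_congr rfl fun n _ => ?_
            rw [conv_anti 2 1 n]
        _ ≤ (∑ i ∈ Finset.range N, a 1 i * (4/27:ℝ)^i) * (∑ j ∈ Finset.range N, a 2 j * (4/27:ℝ)^j) :=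
            sum_conv_le (fun i => mul_nonneg (a_nonneg 1 i) (by positivity))
              (fun j => mul_nonneg (a_nonneg 2 j) (by positivity)) N
        _ ≤ (3/2) * (9/4) := by
            have hn1 : 0 ≤ ∑ i ∈ Finset.range N, a 1 i * (4/27:ℝ)^i :=
              Finset.sum_nonneg fun i _ => mul_nonneg (a_nonneg 1 i) (by positivity)
            have hn2 : 0 ≤ ∑ j ∈ Finset.range N, a 2 j * (4/27:ℝ)^j :=
              Finset.sum_nonneg fun j _ => mul_nonneg (a_nonneg 2 j) (by positivity)
            exact mul_le_mul ih h2 hn2 (by norm_num)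
        _ = 27/8 := by norm_num
    rw [Finset.sum_range_succ']
    have : ∑ n ∈ Finset.range N, a 1 (n+1) * (4/27:ℝ) ^ (n+1)
        = (4/27) * ∑ n ∈ Finset.range N, a 3 n * (4/27:ℝ) ^ n := by
      rw [Finset.mul_sum]
      refine Finset.sum_congr rfl fun n _ => ?_
      rw [← a_three]
      ring
    rw [this, a_zero_right]
    norm_num
    linarith

/-- `Σ_{k≥0} C_k (4/27)^k` converges and equals `4/3`. -/
theorem hasSum_C_at_radius :
    HasSum (fun k : ℕ => C k * (4 / 27) ^ k) (4 / 3) := by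
  set x : ℝ := 4/27 with hx
  set t : ℕ → ℝ := fun n => a 1 n * x ^ n with hdef
  have ht_nonneg : ∀ n, 0 ≤ t n := fun n => mul_nonneg (a_nonneg 1 n) (by positivity)
  have hsum : Summable t := summable_of_sum_range_le ht_nonneg sum_range_le
  set B : ℝ := ∑' n, t n with hB
  have hB_le : B ≤ 3/2 := Summable.tsum_le_of_sum_range_le hsum sum_range_le
  have hB_ge : (1:ℝ) ≤ B := by
    have := Summable.le_tsum hsum 0 (fun i _ => ht_nonneg i)
    simpa [hdef, a_zero_right] using this
  have ht_norm : Summable (fun n => ‖t n‖) := by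
    refine hsum.congr fun n => ?_
    exact (Real.norm_of_nonneg (ht_nonneg n)).symm
  -- a2 series
  have h2sum : Summable (fun n => a 2 n * x ^ n) := by
    have := summable_norm_sum_mul_antidiagonal_of_summable_norm ht_norm ht_norm
    refine this.of_norm.congr fun n => ?_
    rw [hdef]
    exact conv_anti 1 1 n x
  have h2val : B * B = ∑' n, a 2 n * x ^ n := by
    rw [hB, tsum_mul_tsum_eq_tsum_sum_antidiagonal_of_summable_norm ht_norm ht_norm]
    refine tsum_congr fun n => ?_
    rw [hdef]
    exact conv_anti 1 1 n x
  have h2norm : Summable (fun n => ‖a 2 n * x ^ n‖) := by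
    refine h2sum.congr fun n => ?_
    exact (Real.norm_of_nonneg (mul_nonneg (a_nonneg 2 n) (by positivity))).symm
  -- a3 series
  have h3sum : Summable (fun n => a 3 n * x ^ n) := by
    have := summable_norm_sum_mul_antidiagonal_of_summable_norm ht_norm h2norm
    refine this.of_norm.congr fun n => ?_
    rw [hdef]
    exact conv_anti 2 1 n x
  have h3val : B * (B * B) = ∑' n, a 3 n * x ^ n := by
    rw [h2val, hB, tsum_mul_tsum_eq_tsum_sum_antidiagonal_of_summable_norm ht_norm h2norm]
    refine tsum_congr fun n => ?_
    rw [hdef]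
    exact conv_anti 2 1 n x
  -- equation B = 1 + x * B^3
  have heq : B = 1 + x * (B * (B * B)) := by
    rw [h3val, ← tsum_mul_left]
    have : ∀ n, x * (a 3 n * x ^ n) = t (n+1) := by
      intro n
      rw [hdef, a_three]
      ring
    rw [tsum_congr this]
    have := Summable.tsum_eq_zero_add hsum
    rw [hB, this, hdef]
    simp [a_zero_right]
  -- solve: B = 3/2
  have hBval : B = 3/2 := by
    have hfact : (2*B - 3)^2 * (B + 3) = 0 := by
      have : 27 * B = 27 + 4 * (B * (B * B)) := by
        rw [hx] at heq; linarith
      nlinarith [this]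
    have : (2*B - 3)^2 = 0 := by
      rcases mul_eq_zero.mp hfact with h | h
      · exact h
      · nlinarith
    have := pow_eq_zero_iff (n := 2) (by norm_num) |>.mp this
    linarith
  -- final assembly
  have hshift : HasSum (fun n : ℕ => C (n+1) * x ^ (n+1)) (1/3) := by
    have h1 : HasSum (fun n => (3*x) * t n) ((3*x) * B) := hsum.hasSum.mul_left _
    have h2 : HasSum (fun n => x * (a 2 n * x ^ n)) (x * (B * B)) :=
      (h2sum.hasSum_iff.mpr h2val.symm).mul_left _
    have h3 := h1.sub h2
    have : (3*x) * B - x * (B*B) = 1/3 := by rw [hBval, hx]; norm_num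
    rw [this] at h3
    refine h3.congr_fun fun n => ?_
    rw [C_succ, hdef]
    ring
  have := (hasSum_nat_add_iff (f := fun k : ℕ => C k * x ^ k) 1).mp hshift
  simp only [Finset.range_one, Finset.sum_singleton, pow_zero, mul_one] at this
  have hC0 : C 0 = 1 := by simp [C]
  rw [hC0] at this
  norm_num at this
  convert this using 2
end

section
/- With C_0 = 1 and C_k = 2·(3k−3)!/(k!·(2k−1)!) for k ≥ 1, the sum Σ_{k≥0} k·C_k·(4/27)^k converges and equals 4/9. -/
/-- First-passage weights for the critical `{+2,-1}` walk. -/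
noncomputable def aa : ℕ → ℕ → ℝ
  | 0, j => if j = 0 then 1 else 0
  | (m+1), j => ((m+1 : ℕ) : ℝ) * (Nat.factorial (3*j+m) : ℝ) /
      ((Nat.factorial j : ℝ) * (Nat.factorial (2*j+m+1) : ℝ))
      * (1/3)^j * (2/3)^(2*j+m+1)

lemma aa_nonneg (m j : ℕ) : 0 ≤ aa m j := by
  cases m with
  | zero => simp only [aa]; split <;> norm_num
  | succ m => unfold aa; positivity

lemma aa_zero_right (m : ℕ) : aa (m+1) 0 = (2/3) * aa m 0 := by
  cases m with
  | zero => simp [aa, Nat.factorial]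
  | succ m =>
      simp only [aa]
      have e1 : 3*0+(m+1) = m+1 := by ring
      have e2 : 2*0+(m+1)+1 = (m+1)+1 := by ring
      have e3 : 3*0+m = m := by ring
      have e4 : 2*0+m+1 = m+1 := by ring
      try rw [e1]
      try rw [e2]
      try rw [e3]
      try rw [e4]
      rw [Nat.factorial_succ (m+1), Nat.factorial_succ m, pow_succ]
      set Fm := (Nat.factorial m : ℝ) with hFm
      have h1 : Fm ≠ 0 := by rw [hFm]; positivity
      have h2 : ((m:ℝ)+1) ≠ 0 := by positivity
      push_cast
      field_simp
      ring

lemma aa_rec (m j : ℕ) :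
    aa (m+1) (j+1) = (2/3) * aa m (j+1) + (1/3) * aa (m+3) j := by
  cases m with
  | zero =>
      simp only [aa, if_neg (Nat.succ_ne_zero j)]
      have e1 : 3*(j+1)+0 = (3*j+2)+1 := by ring
      have e2 : 2*(j+1)+0+1 = (2*j+2)+1 := by ring
      rw [e1, e2, Nat.factorial_succ (3*j+2), Nat.factorial_succ (2*j+2),
        Nat.factorial_succ j, pow_succ]
      set A := (Nat.factorial (3*j+2) : ℝ) with hA
      set B := (Nat.factorial (2*j+2) : ℝ) with hB
      set Fj := (Nat.factorial j : ℝ) with hFj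
      have h1 : Fj ≠ 0 := by rw [hFj]; positivity
      have h2 : B ≠ 0 := by rw [hB]; positivity
      have h3 : ((j:ℝ)+1) ≠ 0 := by positivity
      push_cast
      field_simp
      ring
  | succ s =>
      simp only [aa]
      have e1 : 3*(j+1)+(s+1) = (3*j+s+3)+1 := by ring
      have e2 : 2*(j+1)+(s+1)+1 = (2*j+s+3)+1 := by ring
      have e3 : 3*(j+1)+s = 3*j+s+3 := by ring
      have e4 : 2*(j+1)+s+1 = 2*j+s+3 := by ring
      have e5 : 3*j+(s+3) = 3*j+s+3 := by ring
      have e6 : 2*j+(s+3)+1 = (2*j+s+3)+1 := by ring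
      rw [e1, e2, e3, e4, e5, e6]
      rw [Nat.factorial_succ (3*j+s+3), Nat.factorial_succ (2*j+s+3),
        Nat.factorial_succ j, pow_succ, pow_succ]
      set A := (Nat.factorial (3*j+s+3) : ℝ) with hA
      set B := (Nat.factorial (2*j+s+3) : ℝ) with hB
      set Fj := (Nat.factorial j : ℝ) with hFj
      have h1 : Fj ≠ 0 := by rw [hFj]; positivity
      have h2 : B ≠ 0 := by rw [hB]; positivity
      have h3 : ((j:ℝ)+1) ≠ 0 := by positivity
      push_cast
      field_simp
      ring

/-- Partial sums of each row are bounded by 1. -/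
lemma aa_sum_le (J : ℕ) : ∀ m, ∑ j ∈ Finset.range J, aa m j ≤ 1 := by
  induction J using Nat.strong_induction_on with
  | _ J IH =>
    intro m
    induction m with
    | zero =>
        have h : ∀ j, aa 0 j = if j = 0 then (1:ℝ) else 0 := fun j => rfl
        simp only [h]
        rw [Finset.sum_ite_eq' (Finset.range J) 0 (fun _ => (1:ℝ))]
        split <;> norm_num
    | succ m IHm =>
        cases J with
        | zero => simp
        | succ J' =>
            rw [Finset.sum_range_succ']
            have hsplit : ∑ i ∈ Finset.range J', aa (m+1) (i+1)
                = (2/3) * (∑ i ∈ Finset.range J', aa m (i+1))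
                  + (1/3) * (∑ i ∈ Finset.range J', aa (m+3) i) := by
              rw [Finset.mul_sum, Finset.mul_sum, ← Finset.sum_add_distrib]
              exact Finset.sum_congr rfl fun i _ => aa_rec m i
            rw [hsplit, aa_zero_right]
            have hm : ∑ j ∈ Finset.range (J'+1), aa m j ≤ 1 := IHm
            rw [Finset.sum_range_succ'] at hm
            have h3 : ∑ i ∈ Finset.range J', aa (m+3) i ≤ 1 :=
              IH J' (Nat.lt_succ_self J') (m+3)
            nlinarith [hm, h3]

lemma aa_summable (m : ℕ) : Summable (aa m) :=
  summable_of_sum_range_le (aa_nonneg m) (fun n => aa_sum_le n m)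

noncomputable def BB (m : ℕ) : ℝ := ∑' j, aa m j

lemma BB_zero : BB 0 = 1 := by
  have h : (fun j : ℕ => aa 0 j) = fun j : ℕ => if j = 0 then (1:ℝ) else 0 := by
    funext j; rfl
  rw [BB, h]
  exact tsum_ite_eq 0 1

lemma BB_nonneg (m : ℕ) : 0 ≤ BB m :=
  tsum_nonneg (aa_nonneg m)

lemma BB_le_one (m : ℕ) : BB m ≤ 1 :=
  Real.tsum_le_of_sum_range_le (aa_nonneg m) (fun n => aa_sum_le n m)

lemma BB_rec (m : ℕ) : BB (m+1) = (2/3) * BB m + (1/3) * BB (m+3) := by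
  have hs1 : Summable fun j => aa m (j+1) := (summable_nat_add_iff 1).2 (aa_summable m)
  have hs3 : Summable (aa (m+3)) := aa_summable (m+3)
  have h0 : BB (m+1) = aa (m+1) 0 + ∑' j, aa (m+1) (j+1) :=
    Summable.tsum_eq_zero_add (aa_summable (m+1))
  have h1 : ∑' j, aa (m+1) (j+1)
      = ∑' j, ((2/3) * aa m (j+1) + (1/3) * aa (m+3) j) := by
    congr 1; funext j; exact aa_rec m j
  have h2 : ∑' j, ((2/3) * aa m (j+1) + (1/3) * aa (m+3) j)
      = (2/3) * (∑' j, aa m (j+1)) + (1/3) * BB (m+3) := by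
    rw [Summable.tsum_add (hs1.mul_left _) (hs3.mul_left _), tsum_mul_left, tsum_mul_left]
    rfl
  have h3 : BB m = aa m 0 + ∑' j, aa m (j+1) := Summable.tsum_eq_zero_add (aa_summable m)
  have h4 : aa (m+1) 0 = (2/3) * aa m 0 := aa_zero_right m
  rw [h0, h1, h2, h4]
  linarith [h3]

lemma sq_le_four_pow (k : ℕ) : ((k:ℝ))^2 ≤ 4^k := by
  induction k with
  | zero => norm_num
  | succ k ih =>
      have h1 : (1:ℝ) ≤ 4^k := one_le_pow₀ (by norm_num)
      have : (4:ℝ)^(k+1) = 4 * 4^k := by rw [pow_succ]; ring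
      rw [this]
      push_cast
      nlinarith [ih, h1, sq_nonneg ((k:ℝ) - 1)]

lemma BB_eq_one (m : ℕ) : BB m = 1 := by
  set γ : ℝ := (BB 2 - 2*BB 1 + BB 0)/9 with hγdef
  set β : ℝ := BB 1 - BB 0 + 3*γ with hβdef
  set α : ℝ := BB 0 - γ with hαdef
  set f : ℕ → ℝ := fun n => α + β*(n:ℝ) + γ*(-2:ℝ)^n with hfdef
  have hrec : ∀ n, BB (n+3) = 3*BB (n+1) - 2*BB n := by
    intro n; have := BB_rec n; linarith
  have hform : ∀ n, BB n = f n := by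
    have hb0 : BB 0 = f 0 := by
      have : f 0 = α + γ := by simp [hfdef]
      rw [this, hαdef]; ring
    have hb1 : BB 1 = f 1 := by
      have : f 1 = α + β - 2*γ := by simp [hfdef]; ring
      rw [this, hαdef, hβdef]; ring
    have hb2 : BB 2 = f 2 := by
      have : f 2 = α + 2*β + 4*γ := by simp [hfdef]; norm_num; ring
      rw [this, hαdef, hβdef, hγdef]; ring
    have key : ∀ n, (BB n = f n) ∧ (BB (n+1) = f (n+1)) ∧ (BB (n+2) = f (n+2)) := by
      intro n
      induction n with
      | zero => exact ⟨hb0, hb1, hb2⟩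
      | succ n ih =>
          refine ⟨ih.2.1, ih.2.2, ?_⟩
          show BB (n+3) = f (n+3)
          rw [hrec n, ih.1, ih.2.1]
          simp only [hfdef]
          have hp1 : ((-2:ℝ))^(n+1) = (-2)^n * (-2) := by rw [pow_succ]
          have hp3 : ((-2:ℝ))^(n+3) = (-2)^n * (-8) := by rw [pow_add]; norm_num
          rw [hp1, hp3]
          push_cast
          ring
    exact fun n => (key n).1
  have habs : ∀ n : ℕ, 0 ≤ BB n ∧ BB n ≤ 1 := fun n => ⟨BB_nonneg n, BB_le_one n⟩
  have hγ : γ = 0 := by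
    by_contra hne
    rcases lt_or_gt_of_ne hne with hneg | hpos
    · -- γ < 0 : use even index 2k
      obtain ⟨k, hk⟩ := exists_nat_gt (max 1 ((|α| + 2*|β|) / (-γ)))
      have hk1 : (1:ℝ) ≤ k := le_of_lt (lt_of_le_of_lt (le_max_left _ _) hk)
      have hk2 : (|α| + 2*|β|) / (-γ) < k := lt_of_le_of_lt (le_max_right _ _) hk
      have h4 : ((k:ℝ))^2 ≤ 4^k := sq_le_four_pow k
      have hB := (habs (2*k)).1
      rw [hform (2*k)] at hB
      simp only [hfdef] at hB
      have hpow : ((-2:ℝ))^(2*k) = 4^k := by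
        rw [pow_mul]; norm_num
      rw [hpow] at hB
      have hα : α ≤ |α| := le_abs_self α
      have hβ' : β * ((2*k : ℕ):ℝ) ≤ 2 * |β| * k := by
        have h1 : β ≤ |β| := le_abs_self β
        push_cast
        nlinarith [abs_nonneg β, Nat.cast_nonneg (α := ℝ) k]
      have hd : (|α| + 2*|β|) < (-γ) * k := by
        rw [div_lt_iff₀ (by linarith)] at hk2; linarith
      have hkpos : (0:ℝ) < k := by linarith
      have e1 : γ * (4:ℝ)^k ≤ γ * ((k:ℝ))^2 := mul_le_mul_of_nonpos_left h4 (le_of_lt hneg)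
      push_cast at hB hβ'
      nlinarith [hB, hβ', hα, e1, mul_lt_mul_of_pos_right hd hkpos, hk1,
        mul_nonneg (abs_nonneg α) (by linarith : (0:ℝ) ≤ (k:ℝ) - 1)]
    · -- γ > 0 : use odd index 2k+1
      obtain ⟨k, hk⟩ := exists_nat_gt (max 1 ((|α| + 3*|β|) / (2*γ)))
      have hk1 : (1:ℝ) ≤ k := le_of_lt (lt_of_le_of_lt (le_max_left _ _) hk)
      have hk2 : (|α| + 3*|β|) / (2*γ) < k := lt_of_le_of_lt (le_max_right _ _) hk
      have h4 : ((k:ℝ))^2 ≤ 4^k := sq_le_four_pow k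
      have hB := (habs (2*k+1)).1
      rw [hform (2*k+1)] at hB
      simp only [hfdef] at hB
      have hpow : ((-2:ℝ))^(2*k+1) = -(2 * 4^k) := by
        rw [pow_succ, pow_mul]; norm_num; ring
      rw [hpow] at hB
      have hα : α ≤ |α| := le_abs_self α
      have hβ' : β * ((2*k+1 : ℕ):ℝ) ≤ 3 * |β| * k := by
        have h1 : β ≤ |β| := le_abs_self β
        push_cast
        nlinarith [abs_nonneg β, hk1]
      have hd : (|α| + 3*|β|) < 2*γ * k := by
        rw [div_lt_iff₀ (by linarith)] at hk2; linarith
      have hkpos : (0:ℝ) < k := by linarith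
      have e1 : γ * ((k:ℝ))^2 ≤ γ * (4:ℝ)^k := mul_le_mul_of_nonneg_left h4 (le_of_lt hpos)
      push_cast at hB hβ'
      nlinarith [hB, hβ', hα, e1, mul_lt_mul_of_pos_right hd hkpos, hk1,
        mul_nonneg (abs_nonneg α) (by linarith : (0:ℝ) ≤ (k:ℝ) - 1)]
  have hβ : β = 0 := by
    by_contra hne
    rcases lt_or_gt_of_ne hne with hneg | hpos
    · obtain ⟨n, hn⟩ := exists_nat_gt (α / (-β))
      have hB := (habs n).1
      rw [hform n] at hB
      simp only [hfdef, hγ] at hB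
      rw [div_lt_iff₀ (by linarith)] at hn
      nlinarith [hB]
    · obtain ⟨n, hn⟩ := exists_nat_gt ((1 - α) / β)
      have hB := (habs n).2
      rw [hform n] at hB
      simp only [hfdef, hγ] at hB
      rw [div_lt_iff₀ hpos] at hn
      nlinarith [hB]
  have hα1 : α = 1 := by
    have h := hform 0
    simp only [hfdef, hγ, hβ] at h
    have h0 := BB_zero
    push_cast at h
    simp at h
    linarith
  rw [hform m]
  simp only [hfdef, hγ, hβ, hα1]
  ring

theorem hasSum_aa_one : HasSum (aa 1) 1 := by
  have h := (aa_summable 1).hasSum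
  rwa [show ∑' j, aa 1 j = 1 from BB_eq_one 1] at h

/-- `Σ_{k≥0} k · C_k · (4/27)^k` converges and equals `4/9`. -/
theorem hasSum_k_C_at_radius :
    HasSum (fun k : ℕ => (k : ℝ) * C k * (4 / 27) ^ k) (4 / 9) := by
  have key : HasSum (fun j : ℕ => ((j+1 : ℕ) : ℝ) * C (j+1) * (4 / 27) ^ (j+1)) (4/9) := by
    have h : (fun j : ℕ => ((j+1 : ℕ) : ℝ) * C (j+1) * (4 / 27) ^ (j+1))
        = fun j : ℕ => (4/9) * aa 1 j := by
      funext j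
      have h3 : 3 * (j+1) - 3 = 3 * j := by omega
      have h2 : 2 * (j+1) - 1 = 2 * j + 1 := by omega
      rw [C, if_neg (Nat.succ_ne_zero j), h3, h2]
      simp only [aa]
      have hfact : (Nat.factorial (j+1) : ℝ) = (j+1) * Nat.factorial j := by
        rw [Nat.factorial_succ]; push_cast; ring
      have e1 : 3*j+0 = 3*j := by ring
      have e2 : 2*j+0+1 = 2*j+1 := by ring
      rw [e1, e2, hfact]
      have hp1 : ((2:ℝ)/3)^(2*j+1) = (4/9)^j * (2/3) := by
        rw [pow_succ, pow_mul]; norm_num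
      have hp2 : ((4:ℝ)/27)^(j+1) = (4/27)^j * (4/27) := by rw [pow_succ]
      have hp3 : ((4:ℝ)/27)^j = (1/3)^j * (4/9)^j := by
        rw [← mul_pow]; norm_num
      rw [hp1, hp2, hp3]
      have hj : (Nat.factorial j : ℝ) ≠ 0 := by positivity
      have h2j : (Nat.factorial (2*j+1) : ℝ) ≠ 0 := by positivity
      have hj1 : ((j:ℝ)+1) ≠ 0 := by positivity
      push_cast
      field_simp
      ring
    rw [h]
    simpa using hasSum_aa_one.mul_left (4/9)
  have h2 := (hasSum_nat_add_iff (f := fun k : ℕ => (k : ℝ) * C k * (4 / 27) ^ k) 1).mp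
    (by simpa using key)
  simpa [C] using h2
end
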